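/- In the Bowen lifting setup, there exists a Borel probability measure ν̃ on X such that for every continuous function φ : X → ℝ, ∫ φ dν̃ = lim_{k→∞} ∫ (φ ∘ F^k)* dν̄. Moreover, any Borel probability measure ν̃ on X with this property is F-invariant, i.e. F_* ν̃ = ν̃. -/

import Mathlib

open MeasureTheory Filter
open TopologicalSpace Set
open scoped NNReal ENNReal BoundedContinuousFunction

noncomputable section

/-- The discretization of `φ : X → ℝ` along the fibers of `π : X → Y`:
`φ*(y) = inf {φ(x) : π(x) = y}`. -/
def disc {X Y : Type*} (π : X → Y) (φ : X → ℝ) : Y → ℝ :=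
  fun y => sInf (φ '' (π ⁻¹' {y}))

/-- If every element of a nonempty set of reals is within `ε` of `c`, then so is its inf. -/
lemma abs_sInf_sub_le {S : Set ℝ} (hS : S.Nonempty) {c ε : ℝ} (h : ∀ s ∈ S, |s - c| ≤ ε) :
    |sInf S - c| ≤ ε := by
  obtain ⟨s0, hs0⟩ := hS
  have hbdd : BddBelow S := ⟨c - ε, fun s hs => by have := h s hs; rw [abs_le] at this; linarith⟩
  rw [abs_le]
  constructor
  · have : c - ε ≤ sInf S :=
      le_csInf ⟨s0, hs0⟩ fun s hs => by have := h s hs; rw [abs_le] at this; linarith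
    linarith
  · have h1 : sInf S ≤ s0 := csInf_le hbdd hs0
    have := h s0 hs0
    rw [abs_le] at this
    linarith

/-- If two sequences are eventually within every `ε` of each other and one converges,
so does the other, to the same limit. -/
lemma tendsto_of_eventually_close {u v : ℕ → ℝ} {l : ℝ}
    (h : ∀ ε > 0, ∃ N, ∀ k ≥ N, |u k - v k| ≤ ε) (hv : Tendsto v atTop (nhds l)) :
    Tendsto u atTop (nhds l) := by
  rw [Metric.tendsto_atTop] at hv ⊢
  intro ε hε
  obtain ⟨N1, hN1⟩ := h (ε / 2) (by linarith)
  obtain ⟨N2, hN2⟩ := hv (ε / 2) (by linarith)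
  refine ⟨max N1 N2, fun k hk => ?_⟩
  have h1 := hN1 k (le_trans (le_max_left _ _) hk)
  have h2 := hN2 k (le_trans (le_max_right _ _) hk)
  rw [Real.dist_eq] at h2 ⊢
  have h3 : |u k - l| ≤ |u k - v k| + |v k - l| := abs_sub_le _ _ _
  linarith


open MeasureTheory Filter
open TopologicalSpace Set
open scoped NNReal ENNReal BoundedContinuousFunction

set_option maxHeartbeats 1000000 in
theorem rmk_compact {X : Type*} [MetricSpace X] [CompactSpace X] [MeasurableSpace X]
    [BorelSpace X] (L : C(X, ℝ) → ℝ)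
    (hadd : ∀ f g : C(X, ℝ), L (f + g) = L f + L g)
    (hsmul : ∀ (c : ℝ) (f : C(X, ℝ)), L (c • f) = c * L f)
    (hmono : ∀ f g : C(X, ℝ), (∀ x, f x ≤ g x) → L f ≤ L g)
    (hone : L 1 = 1) :
    ∃ μ : Measure X, IsProbabilityMeasure μ ∧ ∀ f : C(X, ℝ), ∫ x, f x ∂μ = L f := by
  classical
  have hzero : L 0 = 0 := by have := hsmul 0 0; simpa using this
  have hpos : ∀ f : C(X, ℝ), (∀ x, 0 ≤ f x) → 0 ≤ L f := by
    intro f hf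
    have := hmono 0 f (by simpa using hf)
    simpa [hzero] using this
  have hneg : ∀ f : C(X, ℝ), L (-f) = - L f := by
    intro f
    have := hsmul (-1) f
    simpa using this
  have Lsum : ∀ {ι : Type} (s : Finset ι) (F : ι → C(X, ℝ)),
      L (∑ i ∈ s, F i) = ∑ i ∈ s, L (F i) := by
    intro ι s F
    induction s using Finset.induction_on with
    | empty => simpa using hzero
    | insert _ _ hnot ih => rename_i a s
                            rw [Finset.sum_insert hnot, Finset.sum_insert hnot, hadd, ih]
  -- admissible test functions and the content
  set Adm : Set X → Set C(X, ℝ) :=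
    fun K => {f : C(X, ℝ) | (∀ x, 0 ≤ f x) ∧ ∀ x ∈ K, 1 ≤ f x} with hAdm
  set lam : Set X → ℝ := fun K => sInf (L '' Adm K) with hlam
  have hone_mem : ∀ K : Set X, (1 : C(X, ℝ)) ∈ Adm K := by
    intro K; exact ⟨fun x => by norm_num, fun x _ => le_refl 1⟩
  have hSne : ∀ K : Set X, (L '' Adm K).Nonempty := fun K => ⟨L 1, ⟨1, hone_mem K, rfl⟩⟩
  have hSbdd : ∀ K : Set X, BddBelow (L '' Adm K) := by
    intro K
    refine ⟨0, fun r hr => ?_⟩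
    obtain ⟨f, hf, rfl⟩ := hr
    exact hpos f hf.1
  have lam_nonneg : ∀ K : Set X, 0 ≤ lam K := fun K => le_csInf (hSne K) (by
    rintro r ⟨f, hf, rfl⟩; exact hpos f hf.1)
  have lam_le : ∀ (K : Set X) (f : C(X, ℝ)), f ∈ Adm K → lam K ≤ L f := by
    intro K f hf
    exact csInf_le (hSbdd K) ⟨f, hf, rfl⟩
  have lam_mono : ∀ K₁ K₂ : Set X, K₁ ⊆ K₂ → lam K₁ ≤ lam K₂ := by
    intro K₁ K₂ h
    apply csInf_le_csInf (hSbdd K₁) (hSne K₂)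
    rintro r ⟨f, hf, rfl⟩
    exact ⟨f, ⟨hf.1, fun x hx => hf.2 x (h hx)⟩, rfl⟩
  have lam_le_one : ∀ K : Set X, lam K ≤ 1 := by
    intro K
    have := lam_le K 1 (hone_mem K)
    rwa [hone] at this
  -- subadditivity
  have lam_union_le : ∀ K₁ K₂ : Set X, lam (K₁ ∪ K₂) ≤ lam K₁ + lam K₂ := by
    intro K₁ K₂
    apply le_of_forall_pos_le_add
    intro ε hε
    obtain ⟨r₁, ⟨f₁, hf₁, rfl⟩, hr₁⟩ :=
      exists_lt_of_csInf_lt (hSne K₁) (lt_add_of_pos_right (lam K₁) (half_pos hε))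
    obtain ⟨r₂, ⟨f₂, hf₂, rfl⟩, hr₂⟩ :=
      exists_lt_of_csInf_lt (hSne K₂) (lt_add_of_pos_right (lam K₂) (half_pos hε))
    have hadm : f₁ + f₂ ∈ Adm (K₁ ∪ K₂) := by
      constructor
      · intro x; have := hf₁.1 x; have := hf₂.1 x
        simp only [ContinuousMap.add_apply]; linarith [hf₁.1 x, hf₂.1 x]
      · rintro x (hx | hx)
        · have := hf₁.2 x hx; have := hf₂.1 x
          simp only [ContinuousMap.add_apply]; linarith
        · have := hf₂.2 x hx; have := hf₁.1 x
          simp only [ContinuousMap.add_apply]; linarith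
    calc lam (K₁ ∪ K₂) ≤ L (f₁ + f₂) := lam_le _ _ hadm
    _ = L f₁ + L f₂ := hadd _ _
    _ ≤ lam K₁ + lam K₂ + ε := by linarith
  -- additivity on disjoint closed sets
  have lam_disjoint : ∀ K₁ K₂ : Set X, IsClosed K₁ → IsClosed K₂ → Disjoint K₁ K₂ →
      lam (K₁ ∪ K₂) = lam K₁ + lam K₂ := by
    intro K₁ K₂ h₁ h₂ hd
    refine le_antisymm (lam_union_le K₁ K₂) ?_
    apply le_csInf (hSne _)
    rintro r ⟨f, hf, rfl⟩
    obtain ⟨g, hg0, hg1, hg01⟩ := exists_continuous_zero_one_of_isClosed h₂ h₁ hd.symm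
    have hfg : f * g ∈ Adm K₁ := by
      constructor
      · intro x
        exact mul_nonneg (hf.1 x) (hg01 x).1
      · intro x hx
        have : g x = 1 := hg1 hx
        simp only [ContinuousMap.mul_apply, this, mul_one]
        exact hf.2 x (Or.inl hx)
    have hfg' : f * (1 - g) ∈ Adm K₂ := by
      constructor
      · intro x
        simp only [ContinuousMap.mul_apply, ContinuousMap.sub_apply, ContinuousMap.one_apply]
        exact mul_nonneg (hf.1 x) (by linarith [(hg01 x).2])
      · intro x hx
        have : g x = 0 := hg0 hx
        simp only [ContinuousMap.mul_apply, ContinuousMap.sub_apply, ContinuousMap.one_apply,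
          this]
        simpa using hf.2 x (Or.inr hx)
    have key : L (f * g) + L (f * (1 - g)) = L f := by
      rw [← hadd]
      congr 1
      ext x
      simp only [ContinuousMap.add_apply, ContinuousMap.mul_apply, ContinuousMap.sub_apply,
        ContinuousMap.one_apply]
      ring
    calc lam K₁ + lam K₂ ≤ L (f * g) + L (f * (1 - g)) :=
          add_le_add (lam_le _ _ hfg) (lam_le _ _ hfg')
    _ = L f := key
  -- the content
  set Λ : Content X :=
    { toFun := fun K => Real.toNNReal (lam K)
      mono' := fun K₁ K₂ h => Real.toNNReal_mono (lam_mono _ _ h)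
      sup_disjoint' := by
        intro K₁ K₂ hd hc₁ hc₂
        show Real.toNNReal (lam (↑K₁ ∪ ↑K₂)) = _
        rw [lam_disjoint _ _ hc₁ hc₂ hd,
          Real.toNNReal_add (lam_nonneg _) (lam_nonneg _)]
      sup_le' := by
        intro K₁ K₂
        show Real.toNNReal (lam (↑K₁ ∪ ↑K₂)) ≤ _
        calc Real.toNNReal (lam (↑K₁ ∪ ↑K₂)) ≤ Real.toNNReal (lam K₁ + lam K₂) :=
              Real.toNNReal_mono (lam_union_le _ _)
        _ = Real.toNNReal (lam K₁) + Real.toNNReal (lam K₂) :=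
              Real.toNNReal_add (lam_nonneg _) (lam_nonneg _) } with hΛ
  have hΛapp : ∀ K : Compacts X, (Λ K : ℝ≥0∞) = ENNReal.ofReal (lam K) := by
    intro K
    rfl
  set μ : Measure X := Λ.measure with hμ
  have hμopen : ∀ (U : Set X) (hU : IsOpen U), μ U = Λ.innerContent ⟨U, hU⟩ := by
    intro U hU
    rw [hμ, Λ.measure_apply hU.measurableSet, Λ.outerMeasure_of_isOpen U hU]
  have hμuniv : μ univ = 1 := by
    rw [hμopen univ isOpen_univ]
    apply le_antisymm
    · apply iSup_le
      intro K
      apply iSup_le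
      intro _
      rw [hΛapp]
      calc ENNReal.ofReal (lam K) ≤ ENNReal.ofReal 1 :=
            ENNReal.ofReal_le_ofReal (lam_le_one _)
      _ = 1 := by norm_num
    · have h1 : lam univ = 1 := by
        refine le_antisymm (lam_le_one _) ?_
        apply le_csInf (hSne _)
        rintro r ⟨f, hf, rfl⟩
        have := hmono 1 f (fun x => hf.2 x (mem_univ x))
        rwa [hone] at this
      have := Λ.le_innerContent ⟨univ, isCompact_univ⟩ ⟨univ, isOpen_univ⟩ (subset_refl _)
      rw [hΛapp] at this
      simp only [Compacts.coe_mk, h1, ENNReal.ofReal_one] at this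
      exact this
  have hprob : IsProbabilityMeasure μ := ⟨hμuniv⟩
  -- F3 : L g ≤ μ U for subordinate g
  have F3 : ∀ (g : C(X, ℝ)) (U : Set X), IsOpen U → (∀ x, 0 ≤ g x) → (∀ x, g x ≤ 1) →
      tsupport g ⊆ U → L g ≤ (μ U).toReal := by
    intro g U hU hg0 hg1 hgU
    have hK : IsCompact (tsupport g) := (isClosed_tsupport g).isCompact
    have h1 : L g ≤ lam (tsupport g) := by
      apply le_csInf (hSne _)
      rintro r ⟨f, hf, rfl⟩
      apply hmono
      intro x
      by_cases hx : x ∈ tsupport g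
      · exact le_trans (hg1 x) (hf.2 x hx)
      · rw [image_eq_zero_of_notMem_tsupport hx]
        exact hf.1 x
    have h2 : (ENNReal.ofReal (lam (tsupport g)) : ℝ≥0∞) ≤ μ U := by
      rw [hμopen U hU]
      have := Λ.le_innerContent ⟨tsupport g, hK⟩ ⟨U, hU⟩ hgU
      rwa [hΛapp] at this
    have hUfin : μ U ≠ ⊤ := measure_ne_top μ U
    calc L g ≤ lam (tsupport g) := h1
    _ = (ENNReal.ofReal (lam (tsupport g))).toReal :=
          (ENNReal.toReal_ofReal (lam_nonneg _)).symm
    _ ≤ (μ U).toReal := ENNReal.toReal_mono hUfin h2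
  refine ⟨μ, hprob, ?_⟩
  -- main: ∫ f = L f ; first L f ≤ ∫ f for all f
  have Nne : Nonempty X := by
    by_contra h
    rw [not_nonempty_iff] at h
    have h10 : (1 : C(X, ℝ)) = 0 := by ext x; exact absurd ⟨x⟩ (not_nonempty_iff.mpr h)
    rw [h10, hzero] at hone
    norm_num at hone
  have hint : ∀ f : C(X, ℝ), Integrable f μ :=
    fun f => f.continuous.integrable_of_hasCompactSupport (HasCompactSupport.of_compactSpace _)
  have F4 : ∀ f : C(X, ℝ), L f ≤ ∫ x, f x ∂μ := by
    intro f
    set b : ℝ := ‖f‖ + 1 with hbdef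
    have hb : 0 < b := by positivity
    have hfb : ∀ x, |f x| < b := by
      intro x
      have := f.norm_coe_le_norm x
      rw [Real.norm_eq_abs] at this
      linarith
    have main : ∀ ε : ℝ, 0 < ε → L f ≤ (∫ x, f x ∂μ) + ε * (2 * b + 2 + ε) := by
      intro ε hε
      -- choose the grid
      set n : ℕ := max 1 ⌈2 * b / ε⌉₊ with hndef
      have hn1 : 1 ≤ n := le_max_left _ _
      have hn0 : (0 : ℝ) < (n : ℝ) := by
        have : (1 : ℕ) ≤ n := hn1
        exact_mod_cast Nat.lt_of_lt_of_le Nat.zero_lt_one this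
      have hnstep : 2 * b / (n : ℝ) ≤ ε := by
        have h1 : 2 * b / ε ≤ (⌈2 * b / ε⌉₊ : ℝ) := Nat.le_ceil _
        have h2 : ((⌈2 * b / ε⌉₊ : ℕ) : ℝ) ≤ (n : ℝ) := by
          exact_mod_cast le_max_right 1 ⌈2 * b / ε⌉₊
        have h3 : 2 * b / ε ≤ (n : ℝ) := le_trans h1 h2
        rw [div_le_iff₀ hn0]
        rw [div_le_iff₀ hε] at h3
        linarith
      have hstep_pos : (0 : ℝ) < 2 * b / n := by positivity
      set y : ℕ → ℝ := fun i => -b + i * (2 * b / n) with hydef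
      have hy0 : y 0 = -b := by simp [hydef]
      have hyn : y n = b := by
        simp only [hydef]
        field_simp
        ring
      have hymono : ∀ i j : ℕ, i ≤ j → y i ≤ y j := by
        intro i j hij
        simp only [hydef]
        have : (i : ℝ) ≤ (j : ℝ) := by exact_mod_cast hij
        nlinarith
      have hystep : ∀ i : ℕ, y (i + 1) = y i + 2 * b / n := by
        intro i
        simp only [hydef]
        push_cast
        ring
      -- the slices
      set E : Fin n → Set X := fun i => ⇑f ⁻¹' Ioc (y i) (y ((i : ℕ) + 1)) with hEdef
      have hEmeas : ∀ i, MeasurableSet (E i) :=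
        fun i => measurableSet_Ioc.preimage (map_continuous f).measurable
      have hEdisj : Pairwise (Function.onFun Disjoint E) := by
        intro i j hij
        have hvalne : (i : ℕ) ≠ (j : ℕ) := fun h => hij (Fin.ext h)
        rw [Function.onFun]
        rw [Set.disjoint_left]
        intro x hxi hxj
        simp only [hEdef, mem_preimage, mem_Ioc] at hxi hxj
        rcases lt_or_gt_of_ne hvalne with h | h
        · have : (i : ℕ) + 1 ≤ (j : ℕ) := h
          have := hymono _ _ this
          linarith [hxi.2, hxj.1]
        · have : (j : ℕ) + 1 ≤ (i : ℕ) := h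
          have := hymono _ _ this
          linarith [hxi.1, hxj.2]
      have hEcover : ⋃ i, E i = univ := by
        ext x
        simp only [mem_iUnion, mem_univ, iff_true]
        have habs := abs_lt.mp (hfb x)
        have hx2 : f x ≤ y n := by rw [hyn]; linarith [habs.2]
        have hex : ∃ j : ℕ, f x ≤ y j := ⟨n, hx2⟩
        have hPj₀ : f x ≤ y (Nat.find hex) := Nat.find_spec hex
        have hj₀pos : Nat.find hex ≠ 0 := by
          intro h0
          rw [h0, hy0] at hPj₀
          linarith [habs.1]
        have hj₀le : Nat.find hex ≤ n := Nat.find_le hx2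
        obtain ⟨i, hji⟩ : ∃ i, Nat.find hex = i + 1 :=
          ⟨Nat.find hex - 1, (Nat.succ_pred_eq_of_ne_zero hj₀pos).symm⟩
        have hilt : i < n := lt_of_lt_of_le (hji ▸ Nat.lt_succ_self i) hj₀le
        refine ⟨⟨i, hilt⟩, ?_⟩
        simp only [hEdef, mem_preimage, mem_Ioc]
        constructor
        · by_contra hle
          push_neg at hle
          exact Nat.find_min hex (hji ▸ Nat.lt_succ_self i) hle
        · rw [← hji]; exact hPj₀
      -- outer approximation by open sets
      have hout : ∀ i, Λ.outerMeasure (E i) ≠ ⊤ := by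
        intro i
        rw [← Λ.measure_apply (hEmeas i)]
        exact measure_ne_top μ (E i)
      set δ : ℝ≥0 := Real.toNNReal (ε / n) with hδdef
      have hδ0 : δ ≠ 0 := by
        simp only [hδdef, ne_eq, Real.toNNReal_eq_zero, not_le]
        positivity
      choose U hU1 hU2 using fun i => Λ.outerMeasure_exists_open (hout i) hδ0
      set V : Fin n → Set X := fun i => ↑(U i) ∩ ⇑f ⁻¹' Iio (y ((i : ℕ) + 1) + ε) with hVdef
      have hVopen : ∀ i, IsOpen (V i) :=
        fun i => (U i).isOpen.inter (isOpen_Iio.preimage (map_continuous f))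
      have hEV : ∀ i, E i ⊆ V i := by
        intro i x hx
        simp only [hEdef, mem_preimage, mem_Ioc] at hx
        exact ⟨hU1 i hx, by simp only [mem_preimage, mem_Iio]; linarith [hx.2]⟩
      have hVf : ∀ i, ∀ x ∈ V i, f x < y ((i : ℕ) + 1) + ε := by
        intro i x hx
        simpa using hx.2
      have hμV : ∀ i, (μ (V i)).toReal ≤ (μ (E i)).toReal + ε / n := by
        intro i
        have h1 : μ (V i) ≤ μ (E i) + ENNReal.ofReal (ε / n) := by
          calc μ (V i) ≤ μ (U i) := measure_mono inter_subset_left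
          _ = Λ.outerMeasure (U i) := Λ.measure_apply (U i).isOpen.measurableSet
          _ ≤ Λ.outerMeasure (E i) + δ := hU2 i
          _ = μ (E i) + ENNReal.ofReal (ε / n) := by
              rw [← Λ.measure_apply (hEmeas i)]
              congr 1
        have h2 : μ (E i) + ENNReal.ofReal (ε / n) ≠ ⊤ :=
          ENNReal.add_ne_top.mpr ⟨measure_ne_top μ _, ENNReal.ofReal_ne_top⟩
        calc (μ (V i)).toReal ≤ (μ (E i) + ENNReal.ofReal (ε / n)).toReal :=
              ENNReal.toReal_mono h2 h1
        _ = (μ (E i)).toReal + ε / n := by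
              rw [ENNReal.toReal_add (measure_ne_top μ _) ENNReal.ofReal_ne_top,
                ENNReal.toReal_ofReal (by positivity)]
      -- partition of unity subordinate to V
      have hcov : (univ : Set X) ⊆ ⋃ i, V i := by
        rw [← hEcover]
        exact iUnion_mono hEV
      obtain ⟨p, hp⟩ := PartitionOfUnity.exists_isSubordinate isClosed_univ V hVopen hcov
      set g : Fin n → C(X, ℝ) := fun i => p i with hgdef
      have hg0 : ∀ i x, 0 ≤ g i x := fun i x => p.nonneg i x
      have hg1 : ∀ i x, g i x ≤ 1 := fun i x => p.le_one i x
      have hgsub : ∀ i, tsupport (g i) ⊆ V i := fun i => hp i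
      have hgsum : ∀ x, ∑ i, g i x = 1 := by
        intro x
        have := p.sum_eq_one (mem_univ x)
        rwa [finsum_eq_sum_of_fintype] at this
      have hgsumC : (∑ i, g i) = (1 : C(X, ℝ)) := by
        ext x
        rw [ContinuousMap.coe_sum]
        simpa using hgsum x
      -- split f along the partition
      have hsplit : f = ∑ i, g i * f := by
        ext x
        rw [ContinuousMap.coe_sum]
        simp only [Finset.sum_apply, ContinuousMap.mul_apply]
        rw [← Finset.sum_mul, hgsum x, one_mul]
      have step1 : L f = ∑ i, L (g i * f) := by
        conv_lhs => rw [hsplit]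
        exact Lsum Finset.univ _
      have step2 : ∀ i, L (g i * f) ≤ (y ((i : ℕ) + 1) + ε) * L (g i) := by
        intro i
        have hptwise : ∀ x, (g i * f) x ≤ ((y ((i : ℕ) + 1) + ε) • g i) x := by
          intro x
          simp only [ContinuousMap.mul_apply, ContinuousMap.smul_apply, smul_eq_mul]
          by_cases hx : x ∈ tsupport (g i)
          · have hfx := hVf i x (hgsub i hx)
            have := hg0 i x
            nlinarith
          · rw [image_eq_zero_of_notMem_tsupport hx]
            simp
        have := hmono _ _ hptwise
        rwa [hsmul] at this
      have step3 : ∀ i, L (g i) ≤ (μ (V i)).toReal :=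
        fun i => F3 (g i) (V i) (hVopen i) (hg0 i) (hg1 i) (hgsub i)
      have step3b : ∀ i, 0 ≤ L (g i) := fun i => hpos _ (hg0 i)
      have hLgsum : ∑ i, L (g i) = 1 := by
        rw [← Lsum, hgsumC, hone]
      -- coefficients
      set c : Fin n → ℝ := fun i => y ((i : ℕ) + 1) + ε + b with hcdef
      have hc0 : ∀ i, 0 ≤ c i := by
        intro i
        have : y 0 ≤ y ((i : ℕ) + 1) := hymono 0 _ (Nat.zero_le _)
        rw [hy0] at this
        simp only [hcdef]
        linarith
      have hcB : ∀ i, c i ≤ 2 * b + ε := by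
        intro i
        have h1 : (i : ℕ) + 1 ≤ n := i.isLt
        have := hymono _ _ h1
        rw [hyn] at this
        simp only [hcdef]
        linarith
      set mE : Fin n → ℝ := fun i => (μ (E i)).toReal with hmEdef
      have hmE0 : ∀ i, 0 ≤ mE i := fun i => ENNReal.toReal_nonneg
      have hsum_mE : ∑ i, mE i = 1 := by
        have h1 : μ (⋃ i, E i) = ∑ i, μ (E i) := by
          rw [measure_iUnion hEdisj hEmeas, tsum_fintype]
        rw [hEcover, hμuniv] at h1
        have h2 : (∑ i, μ (E i)).toReal = ∑ i, (μ (E i)).toReal :=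
          ENNReal.toReal_sum (fun i _ => measure_ne_top μ _)
        rw [← h1] at h2
        simpa using h2.symm
      -- lower bound for the integral
      have hintegral : ∑ i : Fin n, y (i : ℕ) * mE i ≤ ∫ x, f x ∂μ := by
        have hsplitint : ∫ x, f x ∂μ = ∑ i, ∫ x in E i, f x ∂μ := by
          have hbU : ⋃ i ∈ (Finset.univ : Finset (Fin n)), E i = univ := by
            rw [← hEcover]
            ext x
            simp
          rw [← setIntegral_univ, ← hbU]
          exact integral_biUnion_finset Finset.univ (fun i _ => hEmeas i)
            (hEdisj.set_pairwise _) (fun i _ => (hint f).integrableOn)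
        rw [hsplitint]
        apply Finset.sum_le_sum
        intro i _
        apply setIntegral_ge_of_const_le_real (hEmeas i) (measure_ne_top μ _)
        · intro x hx
          simp only [hEdef, mem_preimage, mem_Ioc] at hx
          exact le_of_lt hx.1
        · exact (hint f).integrableOn
      -- assembling
      have chain1 : L f ≤ ∑ i, c i * L (g i) - b := by
        rw [step1]
        have h1 : ∑ i, L (g i * f) ≤ ∑ i : Fin n, (y ((i : ℕ) + 1) + ε) * L (g i) :=
          Finset.sum_le_sum fun i _ => step2 i
        have h2 : ∑ i : Fin n, (y ((i : ℕ) + 1) + ε) * L (g i)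
            = ∑ i, c i * L (g i) - b * ∑ i, L (g i) := by
          rw [Finset.mul_sum, ← Finset.sum_sub_distrib]
          apply Finset.sum_congr rfl
          intro i _
          simp only [hcdef]
          ring
        rw [h2, hLgsum] at h1
        linarith
      have chain2 : ∑ i, c i * L (g i) ≤ ∑ i, c i * (mE i + ε / n) := by
        apply Finset.sum_le_sum
        intro i _
        apply mul_le_mul_of_nonneg_left _ (hc0 i)
        exact le_trans (step3 i) (hμV i)
      have chain3 : ∑ i, c i * (mE i + ε / n) = ∑ i, c i * mE i + (ε / n) * ∑ i, c i := by
        rw [Finset.mul_sum, ← Finset.sum_add_distrib]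
        apply Finset.sum_congr rfl
        intro i _
        ring
      have chain4 : (ε / n) * ∑ i, c i ≤ ε * (2 * b + ε) := by
        have h1 : ∑ i, c i ≤ (n : ℝ) * (2 * b + ε) := by
          calc ∑ i, c i ≤ ∑ _i : Fin n, (2 * b + ε) := Finset.sum_le_sum fun i _ => hcB i
          _ = (n : ℝ) * (2 * b + ε) := by
              rw [Finset.sum_const, Finset.card_univ, Fintype.card_fin, nsmul_eq_mul]
        have h2 : (0 : ℝ) ≤ ε / n := by positivity
        calc (ε / n) * ∑ i, c i ≤ (ε / n) * ((n : ℝ) * (2 * b + ε)) := by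
              apply mul_le_mul_of_nonneg_left h1 h2
        _ = ε * (2 * b + ε) := by field_simp
      have chain5 : ∑ i, c i * mE i ≤ ∑ i : Fin n, y (i : ℕ) * mE i + 2 * b / n + ε + b := by
        have h1 : ∀ i : Fin n, c i * mE i
            = y (i : ℕ) * mE i + (2 * b / n) * mE i + (ε + b) * mE i := by
          intro i
          have hys := hystep (i : ℕ)
          simp only [hcdef]
          rw [hys]
          ring
        have h2 : ∑ i, c i * mE i = ∑ i : Fin n, y (i : ℕ) * mE i + (2 * b / n) * ∑ i, mE i
            + (ε + b) * ∑ i, mE i := by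
          rw [Finset.mul_sum, Finset.mul_sum, ← Finset.sum_add_distrib,
            ← Finset.sum_add_distrib]
          exact Finset.sum_congr rfl fun i _ => h1 i
        rw [h2, hsum_mE]
        linarith
      have hstep_le : 2 * b / n ≤ ε := hnstep
      calc L f ≤ ∑ i, c i * L (g i) - b := chain1
      _ ≤ ∑ i, c i * mE i + (ε / n) * ∑ i, c i - b := by
          rw [← chain3]
          linarith [chain2]
      _ ≤ (∑ i : Fin n, y (i : ℕ) * mE i + 2 * b / n + ε + b) + ε * (2 * b + ε) - b := by
          linarith [chain4, chain5]
      _ ≤ (∫ x, f x ∂μ) + ε * (2 * b + 2 + ε) := by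
          have hexp : ε * (2 * b + 2 + ε) = ε * (2 * b + ε) + 2 * ε := by ring
          linarith [hintegral, hstep_le]
    -- conclude
    apply le_of_forall_pos_le_add
    intro ε' hε'
    set ε : ℝ := min 1 (ε' / (2 * b + 3)) with hεdef
    have hεpos : 0 < ε := lt_min one_pos (div_pos hε' (by linarith))
    have hε1 : ε ≤ 1 := min_le_left _ _
    have hε2 : ε ≤ ε' / (2 * b + 3) := min_le_right _ _
    have := main ε hεpos
    have hfinal : ε * (2 * b + 2 + ε) ≤ ε' := by
      have h1 : ε * (2 * b + 2 + ε) ≤ ε * (2 * b + 3) := by nlinarith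
      have h2 : ε * (2 * b + 3) ≤ ε' := by
        have := (le_div_iff₀ (by linarith : (0:ℝ) < 2 * b + 3)).mp hε2
        linarith
      linarith
    linarith
  intro f
  have h1 := F4 f
  have h2 := F4 (-f)
  rw [hneg] at h2
  simp only [ContinuousMap.neg_apply] at h2
  rw [integral_neg] at h2
  linarith

/-- Bowen lifting: there is a Borel probability measure `ν̃` on `X` with
`∫ φ dν̃ = lim_k ∫ (φ ∘ F^k)* dν̄` for every continuous `φ`; moreover any Borel
probability measure with this property is `F`-invariant. -/
theorem bowen_lift_exists_and_invariant
    {X Y : Type*} [MetricSpace X] [CompactSpace X]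
    [MeasurableSpace X] [BorelSpace X] [MeasurableSpace Y]
    (π : X → Y) (F : X → X) (Fbar : Y → Y) (ν : Measure Y) (C β : ℝ)
    (hπ : Function.Surjective π) (hF : Continuous F) (hFbar : Measurable Fbar)
    (hcomm : π ∘ F = Fbar ∘ π)
    (hprob : IsProbabilityMeasure ν)
    (hinv : Measure.map Fbar ν = ν)
    (hC : 0 < C) (hβ0 : 0 < β) (hβ1 : β < 1)
    (hdiam : ∀ (y : Y) (k : ℕ), Metric.diam (F^[k] '' (π ⁻¹' {y})) ≤ C * β ^ k)
    (hmeas : ∀ φ : X → ℝ, Continuous φ → ∀ k : ℕ, Measurable (disc π (φ ∘ F^[k]))) :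
    (∃ νt : Measure X, IsProbabilityMeasure νt ∧
      ∀ φ : X → ℝ, Continuous φ →
        Tendsto (fun k : ℕ => ∫ y, disc π (φ ∘ F^[k]) y ∂ν) atTop
          (nhds (∫ x, φ x ∂νt))) ∧
    (∀ νt : Measure X, IsProbabilityMeasure νt →
      (∀ φ : X → ℝ, Continuous φ →
        Tendsto (fun k : ℕ => ∫ y, disc π (φ ∘ F^[k]) y ∂ν) atTop
          (nhds (∫ x, φ x ∂νt))) →
      Measure.map F νt = νt) := by
  classical
  constructor
  · -- existence
    have hfiber : ∀ y : Y, (π ⁻¹' {y}).Nonempty := by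
      intro y
      obtain ⟨x, hx⟩ := hπ y
      exact ⟨x, by simp [hx]⟩
    set Z : ℕ → Y → Set X := fun k y => F^[k] '' (π ⁻¹' {y}) with hZdef
    have hZne : ∀ k y, (Z k y).Nonempty := fun k y => (hfiber y).image _
    have hZdist : ∀ k y, ∀ z ∈ Z k y, ∀ z' ∈ Z k y, dist z z' ≤ C * β ^ k := by
      intro k y z hz z' hz'
      refine le_trans (Metric.dist_le_diam_of_mem ?_ hz hz') (hdiam y k)
      exact (Metric.isBounded_of_compactSpace (s := univ)).subset (subset_univ _)
    have hdiscZ : ∀ (φ : X → ℝ) (k : ℕ) (y : Y),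
        disc π (φ ∘ F^[k]) y = sInf (φ '' Z k y) := by
      intro φ k y
      unfold disc
      rw [Set.image_comp]
    have hcommit : ∀ (m : ℕ) (x : X), π (F^[m] x) = Fbar^[m] (π x) := by
      intro m
      induction m with
      | zero => intro x; simp
      | succ m ih =>
          intro x
          rw [Function.iterate_succ', Function.iterate_succ']
          simp only [Function.comp_apply]
          rw [show π (F (F^[m] x)) = Fbar (π (F^[m] x)) from congrFun hcomm (F^[m] x), ih x]
    have hZsub : ∀ k m y, Z (k + m) y ⊆ Z k (Fbar^[m] y) := by
      rintro k m y z ⟨x, hx, rfl⟩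
      refine ⟨F^[m] x, ?_, ?_⟩
      · simp only [mem_preimage, mem_singleton_iff] at hx ⊢
        rw [hcommit m x, hx]
      · rw [← Function.iterate_add_apply]
    -- uniform modulus of continuity along the contraction scales
    have hmod : ∀ φ : X → ℝ, Continuous φ → ∀ ε : ℝ, 0 < ε → ∃ N : ℕ, ∀ k ≥ N,
        ∀ x x' : X, dist x x' ≤ C * β ^ k → |φ x - φ x'| ≤ ε := by
      intro φ hφ ε hε
      have hu : UniformContinuous φ := CompactSpace.uniformContinuous_of_continuous hφ
      obtain ⟨δ, hδ0, hδ⟩ := Metric.uniformContinuous_iff.mp hu ε hε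
      have htend : Tendsto (fun k : ℕ => C * β ^ k) atTop (nhds 0) := by
        have := tendsto_pow_atTop_nhds_zero_of_lt_one (le_of_lt hβ0) hβ1
        simpa using this.const_mul C
      obtain ⟨N, hN⟩ := (Metric.tendsto_atTop.mp htend) δ hδ0
      refine ⟨N, fun k hk x x' hxx => ?_⟩
      have h1 := hN k hk
      rw [Real.dist_eq, sub_zero, abs_of_pos (by positivity)] at h1
      have : dist x x' < δ := lt_of_le_of_lt hxx h1
      have := hδ this
      rw [Real.dist_eq] at this
      exact le_of_lt this
    -- basic facts about the discretizations of continuous functions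
    have hbB : ∀ (Φ : C(X, ℝ)) (k : ℕ) (y : Y), |disc π (⇑Φ ∘ F^[k]) y| ≤ ‖Φ‖ := by
      intro Φ k y
      rw [hdiscZ]
      have := abs_sInf_sub_le ((hZne k y).image Φ) (c := 0) (ε := ‖Φ‖) ?_
      · simpa using this
      · rintro s ⟨z, _, rfl⟩
        simp only [sub_zero]
        have := Φ.norm_coe_le_norm z
        rwa [Real.norm_eq_abs] at this
    have hmeasd : ∀ (Φ : C(X, ℝ)) (k : ℕ), Measurable (disc π (⇑Φ ∘ F^[k])) :=
      fun Φ k => hmeas _ Φ.continuous k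
    have hintgen : ∀ (g : Y → ℝ) (M : ℝ), Measurable g → (∀ y, |g y| ≤ M) →
        Integrable g ν := by
      intro g M hg hM
      refine Integrable.mono' (integrable_const M) hg.aestronglyMeasurable ?_
      exact Filter.Eventually.of_forall fun y => by rw [Real.norm_eq_abs]; exact hM y
    have hintd : ∀ (Φ : C(X, ℝ)) (k : ℕ), Integrable (disc π (⇑Φ ∘ F^[k])) ν :=
      fun Φ k => hintgen _ ‖Φ‖ (hmeasd Φ k) (hbB Φ k)
    have hmapiter : ∀ m : ℕ, Measure.map (Fbar^[m]) ν = ν := by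
      intro m
      induction m with
      | zero => simp
      | succ m ih => rw [Function.iterate_succ', ← Measure.map_map hFbar (hFbar.iterate m), ih,
          hinv]
    have hinte : ∀ (g : Y → ℝ), Measurable g → ∀ m : ℕ,
        ∫ y, g (Fbar^[m] y) ∂ν = ∫ y, g y ∂ν := by
      intro g hg m
      have h1 : AEStronglyMeasurable g (Measure.map (Fbar^[m]) ν) := by
        rw [hmapiter m]
        exact hg.aestronglyMeasurable
      have := integral_map (hFbar.iterate m).aemeasurable h1
      rw [hmapiter m] at this
      exact this.symm
    -- |∫ g - ∫ h| ≤ ε for pointwise ε-close integrands (probability measure)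
    have hintdiff : ∀ (g h : Y → ℝ) (ε : ℝ), Integrable g ν → Integrable h ν →
        (∀ y, |g y - h y| ≤ ε) → |(∫ y, g y ∂ν) - ∫ y, h y ∂ν| ≤ ε := by
      intro g h ε hg hh hgh
      rw [← integral_sub hg hh]
      have h1 : |∫ y, (g y - h y) ∂ν| ≤ ∫ y, |g y - h y| ∂ν := by
        have := norm_integral_le_integral_norm (μ := ν) (f := fun y => g y - h y)
        simpa [Real.norm_eq_abs] using this
      have h2 : ∫ y, |g y - h y| ∂ν ≤ ∫ _y, ε ∂ν :=
        integral_mono ((hg.sub hh).abs) (integrable_const ε) hgh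
      have h3 : ∫ _y : Y, ε ∂ν = ε := by simp [measure_univ]
      linarith
    -- the sequence of integrals
    set A : C(X, ℝ) → ℕ → ℝ := fun Φ k => ∫ y, disc π (⇑Φ ∘ F^[k]) y ∂ν with hAdef
    -- pointwise bound for membership in small fibers
    have hptB : ∀ (Φ : C(X, ℝ)) (ε : ℝ) (k : ℕ) (y : Y),
        (∀ x x' : X, dist x x' ≤ C * β ^ k → |Φ x - Φ x'| ≤ ε) →
        ∀ z ∈ Z k y, |Φ z - sInf (⇑Φ '' Z k y)| ≤ ε := by
      intro Φ ε k y hk z hz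
      have h := abs_sInf_sub_le ((hZne k y).image Φ) (c := Φ z) (ε := ε) ?_
      · rwa [abs_sub_comm]
      · rintro s ⟨z', hz', rfl⟩
        exact hk z' z (hZdist k y z' hz' z hz)
    -- key: uniform Cauchy-type estimate
    have hkey : ∀ (Φ : C(X, ℝ)) (ε : ℝ), 0 < ε → ∃ N, ∀ k ≥ N, ∀ m : ℕ,
        |A Φ (k + m) - A Φ k| ≤ ε := by
      intro Φ ε hε
      obtain ⟨N, hN⟩ := hmod Φ Φ.continuous ε hε
      refine ⟨N, fun k hk m => ?_⟩
      have hpt : ∀ y, |disc π (⇑Φ ∘ F^[k + m]) y - disc π (⇑Φ ∘ F^[k]) (Fbar^[m] y)| ≤ ε := by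
        intro y
        rw [hdiscZ, hdiscZ]
        apply abs_sInf_sub_le ((hZne (k + m) y).image Φ)
        rintro s ⟨z, hz, rfl⟩
        exact hptB Φ ε k (Fbar^[m] y) (hN k hk) z (hZsub k m y hz)
      have heq : A Φ k = ∫ y, disc π (⇑Φ ∘ F^[k]) (Fbar^[m] y) ∂ν :=
        (hinte _ (hmeasd Φ k) m).symm
      rw [hAdef] at heq ⊢
      simp only at heq ⊢
      rw [heq]
      apply hintdiff _ _ ε (hintd Φ (k + m)) _ hpt
      exact hintgen _ ‖Φ‖ ((hmeasd Φ k).comp (hFbar.iterate m)) (fun y => hbB Φ k _)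
    have hcauchy : ∀ Φ : C(X, ℝ), CauchySeq (A Φ) := by
      intro Φ
      rw [Metric.cauchySeq_iff']
      intro ε hε
      obtain ⟨N, hN⟩ := hkey Φ (ε / 2) (by linarith)
      refine ⟨N, fun n hn => ?_⟩
      obtain ⟨m, rfl⟩ := Nat.exists_eq_add_of_le hn
      rw [Real.dist_eq]
      have := hN N le_rfl m
      have h0 := abs_nonneg (A Φ (N + m) - A Φ N)
      linarith
    set L : C(X, ℝ) → ℝ := fun Φ => limUnder atTop (A Φ) with hLdef
    have hLtend : ∀ Φ : C(X, ℝ), Tendsto (A Φ) atTop (nhds (L Φ)) :=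
      fun Φ => (hcauchy Φ).tendsto_limUnder
    -- linearity and positivity of L
    have hLadd : ∀ Φ Ψ : C(X, ℝ), L (Φ + Ψ) = L Φ + L Ψ := by
      intro Φ Ψ
      have h1 : Tendsto (fun k => A Φ k + A Ψ k) atTop (nhds (L Φ + L Ψ)) :=
        (hLtend Φ).add (hLtend Ψ)
      have h2 : Tendsto (A (Φ + Ψ)) atTop (nhds (L Φ + L Ψ)) := by
        apply tendsto_of_eventually_close _ h1
        intro ε hε
        obtain ⟨N1, hN1⟩ := hmod Φ Φ.continuous (ε / 2) (by linarith)
        obtain ⟨N2, hN2⟩ := hmod Ψ Ψ.continuous (ε / 2) (by linarith)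
        refine ⟨max N1 N2, fun k hk => ?_⟩
        have hpt : ∀ y, |disc π (⇑(Φ + Ψ) ∘ F^[k]) y -
            (disc π (⇑Φ ∘ F^[k]) y + disc π (⇑Ψ ∘ F^[k]) y)| ≤ ε := by
          intro y
          rw [hdiscZ, hdiscZ, hdiscZ]
          apply abs_sInf_sub_le ((hZne k y).image _)
          rintro s ⟨z, hz, rfl⟩
          have hΦ := hptB Φ (ε / 2) k y (hN1 k (le_trans (le_max_left _ _) hk)) z hz
          have hΨ := hptB Ψ (ε / 2) k y (hN2 k (le_trans (le_max_right _ _) hk)) z hz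
          simp only [ContinuousMap.add_apply]
          have := abs_sub_le (Φ z + Ψ z)
            (sInf (⇑Φ '' Z k y) + Ψ z) (sInf (⇑Φ '' Z k y) + sInf (⇑Ψ '' Z k y))
          have e1 : |Φ z + Ψ z - (sInf (⇑Φ '' Z k y) + Ψ z)| = |Φ z - sInf (⇑Φ '' Z k y)| := by
            congr 1; ring
          have e2 : |sInf (⇑Φ '' Z k y) + Ψ z - (sInf (⇑Φ '' Z k y) + sInf (⇑Ψ '' Z k y))|
              = |Ψ z - sInf (⇑Ψ '' Z k y)| := by congr 1; ring
          rw [e1, e2] at this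
          linarith
        have hsum : A Φ k + A Ψ k
            = ∫ y, (disc π (⇑Φ ∘ F^[k]) y + disc π (⇑Ψ ∘ F^[k]) y) ∂ν := by
          rw [hAdef]
          simp only
          rw [← integral_add (hintd Φ k) (hintd Ψ k)]
        rw [hsum]
        apply hintdiff _ _ ε (hintd (Φ + Ψ) k) ((hintd Φ k).add (hintd Ψ k)) hpt
      exact tendsto_nhds_unique (hLtend (Φ + Ψ)) h2
    have hLsmul : ∀ (c : ℝ) (Φ : C(X, ℝ)), L (c • Φ) = c * L Φ := by
      intro c Φ
      have h1 : Tendsto (fun k => c * A Φ k) atTop (nhds (c * L Φ)) :=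
        (hLtend Φ).const_mul c
      have h2 : Tendsto (A (c • Φ)) atTop (nhds (c * L Φ)) := by
        apply tendsto_of_eventually_close _ h1
        intro ε hε
        have hεc : 0 < ε / (|c| + 1) := by positivity
        obtain ⟨N, hN⟩ := hmod Φ Φ.continuous (ε / (|c| + 1)) hεc
        refine ⟨N, fun k hk => ?_⟩
        have hpt : ∀ y, |disc π (⇑(c • Φ) ∘ F^[k]) y - c * disc π (⇑Φ ∘ F^[k]) y| ≤ ε := by
          intro y
          rw [hdiscZ, hdiscZ]
          apply abs_sInf_sub_le ((hZne k y).image _)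
          rintro s ⟨z, hz, rfl⟩
          have hΦ := hptB Φ (ε / (|c| + 1)) k y (hN k hk) z hz
          simp only [ContinuousMap.smul_apply, smul_eq_mul]
          rw [← mul_sub, abs_mul]
          calc |c| * |Φ z - sInf (⇑Φ '' Z k y)| ≤ |c| * (ε / (|c| + 1)) :=
                mul_le_mul_of_nonneg_left hΦ (abs_nonneg c)
          _ ≤ ε := by
              have hdm : ε / (|c| + 1) * (|c| + 1) = ε :=
                div_mul_cancel₀ _ (by positivity)
              nlinarith [abs_nonneg c, div_nonneg (le_of_lt hε)
                (by positivity : (0:ℝ) ≤ |c| + 1)]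
        have hmul : c * A Φ k = ∫ y, c * disc π (⇑Φ ∘ F^[k]) y ∂ν := by
          rw [hAdef]
          simp only
          rw [integral_const_mul]
        rw [hmul]
        exact hintdiff _ _ ε (hintd (c • Φ) k) ((hintd Φ k).const_mul c) hpt
      exact tendsto_nhds_unique (hLtend (c • Φ)) h2
    have hLmono : ∀ Φ Ψ : C(X, ℝ), (∀ x, Φ x ≤ Ψ x) → L Φ ≤ L Ψ := by
      intro Φ Ψ h
      apply le_of_tendsto_of_tendsto' (hLtend Φ) (hLtend Ψ)
      intro k
      rw [hAdef]
      simp only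
      apply integral_mono (hintd Φ k) (hintd Ψ k)
      intro y
      rw [hdiscZ, hdiscZ]
      apply le_csInf ((hZne k y).image Ψ)
      rintro s ⟨z, hz, rfl⟩
      have hlb : sInf (⇑Φ '' Z k y) ≤ Φ z := by
        refine csInf_le ⟨-‖Φ‖, ?_⟩ ⟨z, hz, rfl⟩
        rintro r ⟨z', _, rfl⟩
        have := Φ.norm_coe_le_norm z'
        rw [Real.norm_eq_abs, abs_le] at this
        linarith [this.1]
      exact le_trans hlb (h z)
    have hLone : L 1 = 1 := by
      have h1 : Tendsto (A 1) atTop (nhds 1) := by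
        have hA1 : ∀ k, A (1 : C(X, ℝ)) k = 1 := by
          intro k
          rw [hAdef]
          simp only
          have : ∀ y, disc π (⇑(1 : C(X, ℝ)) ∘ F^[k]) y = 1 := by
            intro y
            rw [hdiscZ]
            have himg : ⇑(1 : C(X, ℝ)) '' Z k y = {1} := by
              rw [show ⇑(1 : C(X, ℝ)) = fun _ : X => (1 : ℝ) from rfl]
              rw [Set.Nonempty.image_const (hZne k y)]
            rw [himg, csInf_singleton]
          simp only [this]
          simp [measure_univ]
        have : A (1 : C(X, ℝ)) = fun _ => (1 : ℝ) := funext hA1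
        rw [this]
        exact tendsto_const_nhds
      exact tendsto_nhds_unique (hLtend 1) h1
    obtain ⟨μ, hμprob, hμint⟩ := rmk_compact L hLadd hLsmul hLmono hLone
    refine ⟨μ, hμprob, ?_⟩
    intro φ hφ
    have h1 := hLtend ⟨φ, hφ⟩
    have h2 := hμint ⟨φ, hφ⟩
    simp only [ContinuousMap.coe_mk] at h2
    rw [h2]
    exact h1
  · -- invariance
    intro νt hνt hconv
    have key : ∀ φ : X → ℝ, Continuous φ → ∫ x, φ (F x) ∂νt = ∫ x, φ x ∂νt := by
      intro φ hφ
      have h1 := hconv φ hφ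
      have h2 := hconv (φ ∘ F) (hφ.comp hF)
      have hco : ∀ k : ℕ, (φ ∘ F) ∘ F^[k] = φ ∘ F^[k + 1] := by
        intro k
        rw [Function.iterate_succ']
        rfl
      simp only [hco] at h2
      have h1' : Tendsto (fun k : ℕ => ∫ y, disc π (φ ∘ F^[k + 1]) y ∂ν) atTop
          (nhds (∫ x, φ x ∂νt)) := h1.comp (tendsto_add_atTop_nat 1)
      exact tendsto_nhds_unique h2 h1'
    haveI : IsProbabilityMeasure (Measure.map F νt) :=
      Measure.isProbabilityMeasure_map hF.measurable.aemeasurable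
    apply ext_of_forall_lintegral_eq_of_IsFiniteMeasure
    intro f
    have hfc : Continuous fun x => ((f x : ℝ≥0) : ℝ) := NNReal.continuous_coe.comp f.continuous
    have hri : ∫ x, ((f x : ℝ≥0) : ℝ) ∂(Measure.map F νt) = ∫ x, ((f x : ℝ≥0) : ℝ) ∂νt := by
      rw [integral_map hF.measurable.aemeasurable hfc.aestronglyMeasurable]
      exact key _ hfc
    have hil : ∀ (ρ : Measure X), IsProbabilityMeasure ρ →
        ∫⁻ x, ((f x : ℝ≥0) : ℝ≥0∞) ∂ρ = ENNReal.ofReal (∫ x, ((f x : ℝ≥0) : ℝ) ∂ρ) := by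
      intro ρ hρ
      rw [lintegral_coe_eq_integral]
      exact hfc.integrable_of_hasCompactSupport (HasCompactSupport.of_compactSpace _)
    rw [hil _ this, hil _ hνt, hri]
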